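/- Non-commutativity identity between the rotational derivative and the SE(2) action: if w : ℝ² → ℝ^N is continuously differentiable, θ ∈ ℝ and b ∈ ℝ², then for every y ∈ ℝ², writing z = R_{−θ}(y − b), one has ∂_ψ(T_γ w)(y) = (∂_ψ w)(z) + Dw(z)(R_{π/2 − θ} b), where Dw(z) is the (total) derivative of w at z applied to the vector R_{π/2 − θ} b ∈ ℝ². -/

import Mathlib

open Real

/-- The rotation `R_θ` of the plane by angle `θ`. -/
noncomputable def rot2 (θ : ℝ) (y : EuclideanSpace ℝ (Fin 2)) : EuclideanSpace ℝ (Fin 2) :=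
  (WithLp.equiv 2 (Fin 2 → ℝ)).symm
    ![Real.cos θ * y 0 - Real.sin θ * y 1, Real.sin θ * y 0 + Real.cos θ * y 1]

/-- The partial derivative `∂ᵢ u` in the `i`-th coordinate direction. -/
noncomputable def pd {N : ℕ} (i : Fin 2)
    (u : EuclideanSpace ℝ (Fin 2) → EuclideanSpace ℝ (Fin N))
    (y : EuclideanSpace ℝ (Fin 2)) : EuclideanSpace ℝ (Fin N) :=
  fderiv ℝ u y (EuclideanSpace.single i 1)

/-- The rotational derivative `(∂_ψ u)(y) = y₁ ∂₂u(y) − y₂ ∂₁u(y)`. -/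
noncomputable def rotDeriv {N : ℕ}
    (u : EuclideanSpace ℝ (Fin 2) → EuclideanSpace ℝ (Fin N))
    (y : EuclideanSpace ℝ (Fin 2)) : EuclideanSpace ℝ (Fin N) :=
  y 0 • pd 1 u y - y 1 • pd 0 u y

lemma rot2_apply (θ : ℝ) (y : EuclideanSpace ℝ (Fin 2)) (i : Fin 2) :
    rot2 θ y i = ![Real.cos θ * y 0 - Real.sin θ * y 1,
      Real.sin θ * y 0 + Real.cos θ * y 1] i := rfl

/-- The rotation as a continuous linear map. -/
noncomputable def rotCLM (θ : ℝ) :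
    EuclideanSpace ℝ (Fin 2) →L[ℝ] EuclideanSpace ℝ (Fin 2) :=
  LinearMap.toContinuousLinearMap
  { toFun := rot2 θ
    map_add' := by
      intro x y
      ext i
      fin_cases i <;>
        simp [rot2_apply, PiLp.add_apply] <;> ring
    map_smul' := by
      intro c x
      ext i
      fin_cases i <;>
        simp [rot2_apply, PiLp.smul_apply, smul_eq_mul] <;> ring }

lemma rotCLM_apply (θ : ℝ) (y : EuclideanSpace ℝ (Fin 2)) : rotCLM θ y = rot2 θ y := rfl

/-- Non-commutativity identity between the rotational derivative and the
`SE(2)` action: for `w ∈ C¹` and `z = R_{−θ}(y − b)`,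
`∂_ψ(T_γ w)(y) = (∂_ψ w)(z) + Dw(z)(R_{π/2 − θ} b)`. -/
theorem rotational_derivative_se2_noncommutativity (N : ℕ)
    (w : EuclideanSpace ℝ (Fin 2) → EuclideanSpace ℝ (Fin N))
    (hw : ContDiff ℝ 1 w) (θ : ℝ) (b : EuclideanSpace ℝ (Fin 2))
    (y : EuclideanSpace ℝ (Fin 2)) :
    rotDeriv (fun x => w (rot2 (-θ) (x - b))) y =
      rotDeriv w (rot2 (-θ) (y - b)) +
        fderiv ℝ w (rot2 (-θ) (y - b)) (rot2 (Real.pi / 2 - θ) b) := by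
  set z : EuclideanSpace ℝ (Fin 2) := rot2 (-θ) (y - b) with hz
  set D := fderiv ℝ w z with hD
  have hg : HasFDerivAt (fun x : EuclideanSpace ℝ (Fin 2) => rot2 (-θ) (x - b))
      (rotCLM (-θ)) y := by
    have h1 : HasFDerivAt (fun x : EuclideanSpace ℝ (Fin 2) => x - b)
        (ContinuousLinearMap.id ℝ _) y := (hasFDerivAt_id y).sub_const b
    have h2 := ((rotCLM (-θ)).hasFDerivAt (x := y - b)).comp y h1
    exact h2
  have hwz : DifferentiableAt ℝ w z := hw.differentiable one_ne_zero z
  have hf : HasFDerivAt (fun x => w (rot2 (-θ) (x - b)))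
      (D.comp (rotCLM (-θ))) y := hwz.hasFDerivAt.comp y hg
  have hpd : ∀ i : Fin 2, pd i (fun x => w (rot2 (-θ) (x - b))) y =
      D (rot2 (-θ) (EuclideanSpace.single i 1)) := by
    intro i
    simp [pd, hf.fderiv, rotCLM_apply]
  rw [rotDeriv, hpd 0, hpd 1, rotDeriv]
  simp only [pd, ← hD]
  show y 0 • D (rot2 (-θ) (EuclideanSpace.single 1 1)) -
      y 1 • D (rot2 (-θ) (EuclideanSpace.single 0 1)) =
      (z 0 • D (EuclideanSpace.single 1 1) - z 1 • D (EuclideanSpace.single 0 1)) +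
        D (rot2 (Real.pi / 2 - θ) b)
  rw [← D.map_smul, ← D.map_smul, ← D.map_sub, ← D.map_smul, ← D.map_smul, ← D.map_sub,
    ← D.map_add]
  congr 1
  ext i
  have hb : ∀ j : Fin 2, z j = ![Real.cos θ * (y 0 - b 0) + Real.sin θ * (y 1 - b 1),
      -Real.sin θ * (y 0 - b 0) + Real.cos θ * (y 1 - b 1)] j := by
    intro j
    fin_cases j <;>
      simp [hz, rot2_apply, PiLp.sub_apply, Real.cos_neg, Real.sin_neg] <;> ring
  fin_cases i <;>
    simp [rot2_apply, PiLp.add_apply, PiLp.sub_apply, PiLp.smul_apply,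
      EuclideanSpace.single_apply, hb, Real.cos_pi_div_two_sub, Real.sin_pi_div_two_sub,
      Real.cos_neg, Real.sin_neg, smul_eq_mul] <;> ring
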